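/- Let n be a positive integer and let x, y be symmetric n×n complex matrices (xᵀ = x, yᵀ = y) such that I − x xᴴ and I − xᴴ x are (Hermitian) positive definite and I − xᴴ y is invertible. Set z = φ_x(y) = (I − x xᴴ)^{−1/2} (y − x) (I − xᴴ y)^{−1} (I − xᴴ x)^{1/2}, and assume I + xᴴ z is invertible. Then y = (I − x xᴴ)^{−1/2} (z + x) (I + xᴴ z)^{−1} (I − xᴴ x)^{1/2}; that is, φ_{−x}(φ_x(y)) = y, where φ_{−x}(w) = (I − x xᴴ)^{−1/2} (w + x) (I + xᴴ w)^{−1} (I − xᴴ x)^{1/2}. -/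

import Mathlib

open Matrix
open scoped ComplexOrder

namespace Matrix.PosSemidef

/-- The positive semidefinite square root of a positive semidefinite matrix
(as defined in Mathlib of December 2024; removed from Mathlib since). -/
noncomputable def sqrt {n 𝕜 : Type*} [Fintype n] [RCLike 𝕜] [DecidableEq n]
    {A : Matrix n n 𝕜} (hA : A.PosSemidef) : Matrix n n 𝕜 :=
  hA.1.eigenvectorUnitary.1 * diagonal ((↑) ∘ Real.sqrt ∘ hA.1.eigenvalues) *
  (star hA.1.eigenvectorUnitary : Matrix n n 𝕜)

end Matrix.PosSemidef

namespace Matrix.PosSemidef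

variable {n 𝕜 : Type*} [Fintype n] [RCLike 𝕜] [DecidableEq n]

lemma posSemidef_sqrt {A : Matrix n n 𝕜} (hA : A.PosSemidef) : PosSemidef hA.sqrt := by
  apply PosSemidef.mul_mul_conjTranspose_same
  refine posSemidef_diagonal_iff.mpr fun i ↦ ?_
  rw [Function.comp_apply, RCLike.nonneg_iff]
  constructor
  · simp only [Function.comp_apply, RCLike.ofReal_re]
    exact Real.sqrt_nonneg _
  · simp only [Function.comp_apply, RCLike.ofReal_im]

lemma sqrt_mul_self {A : Matrix n n 𝕜} (hA : A.PosSemidef) : hA.sqrt * hA.sqrt = A := by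
  let C : Matrix n n 𝕜 := hA.1.eigenvectorUnitary
  let E := diagonal ((↑) ∘ Real.sqrt ∘ hA.1.eigenvalues : n → 𝕜)
  suffices C * (E * (star C * C) * E) * star C = A by
    rw [Matrix.PosSemidef.sqrt]
    simpa only [← mul_assoc] using this
  have : E * E = diagonal ((↑) ∘ hA.1.eigenvalues) := by
    rw [diagonal_mul_diagonal]
    congr! with v
    simp [← pow_two, ← RCLike.ofReal_pow, Real.sq_sqrt (hA.eigenvalues_nonneg v)]
  have hs := hA.1.spectral_theorem
  rw [Unitary.conjStarAlgAut_apply] at hs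
  simpa [C, this] using hs.symm

end Matrix.PosSemidef

section helpers

variable {m : Type*} [Fintype m] [DecidableEq m]

omit [DecidableEq m] in
lemma trace_ctm_nonneg (A : Matrix m m ℂ) : 0 ≤ (Aᴴ * A).trace := by
  rw [Matrix.trace]
  refine Finset.sum_nonneg fun i _ => ?_
  simp only [Matrix.diag_apply, Matrix.mul_apply, Matrix.conjTranspose_apply]
  exact Finset.sum_nonneg fun j _ => star_mul_self_nonneg _

omit [DecidableEq m] in
lemma eq_zero_of_trace_ctm {A : Matrix m m ℂ} (h : (Aᴴ * A).trace = 0) : A = 0 := by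
  rw [Matrix.trace] at h
  have h1 : ∀ i ∈ Finset.univ, (0:ℂ) ≤ (Aᴴ * A).diag i := fun i _ => by
    simp only [Matrix.diag_apply, Matrix.mul_apply, Matrix.conjTranspose_apply]
    exact Finset.sum_nonneg fun j _ => star_mul_self_nonneg _
  have h2 := (Finset.sum_eq_zero_iff_of_nonneg h1).mp h
  ext j i
  have h3 := h2 i (Finset.mem_univ i)
  simp only [Matrix.diag_apply, Matrix.mul_apply, Matrix.conjTranspose_apply] at h3
  have h4 := (Finset.sum_eq_zero_iff_of_nonneg (fun j _ => star_mul_self_nonneg (A j i))).mp h3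
  have h5 := h4 j (Finset.mem_univ j)
  simpa using mul_eq_zero.mp h5

set_option maxHeartbeats 1000000 in
/-- If `M * X = X * N` with `M, N` positive semidefinite and `M` invertible, then the
positive square roots intertwine the same way. -/
lemma sqrt_comm {M N X : Matrix m m ℂ} (hM : M.PosSemidef) (hN : N.PosSemidef)
    (hMu : IsUnit M) (hMX : M * X = X * N) : hM.sqrt * X = X * hN.sqrt := by
  set S := hM.sqrt with hSdef
  set T := hN.sqrt with hTdef
  set K := S * X - X * T with hKdef
  have hS2 : S * S = M := hM.sqrt_mul_self
  have hT2 : T * T = N := hN.sqrt_mul_self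
  have e1 : S * K + K * T = 0 := by
    have e : S * K + K * T = S * S * X - X * (T * T) := by
      rw [hKdef]; noncomm_ring
    rw [e, hS2, hT2, hMX, sub_self]
  set R := hM.posSemidef_sqrt.sqrt with hRdef
  set Q := hN.posSemidef_sqrt.sqrt with hQdef
  have hR2 : R * R = S := hM.posSemidef_sqrt.sqrt_mul_self
  have hQ2 : Q * Q = T := hN.posSemidef_sqrt.sqrt_mul_self
  have hRH : Rᴴ = R := (hM.posSemidef_sqrt.posSemidef_sqrt).1
  have hQH : Qᴴ = Q := (hN.posSemidef_sqrt.posSemidef_sqrt).1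
  have t1m : Kᴴ * (S * K) = (R * K)ᴴ * (R * K) := by
    rw [conjTranspose_mul, hRH, mul_assoc, ← mul_assoc R R K, hR2]
  have t2m : Q * (Kᴴ * (K * Q)) = (K * Q)ᴴ * (K * Q) := by
    rw [conjTranspose_mul, hQH, mul_assoc]
  have t2 : (Kᴴ * (K * T)).trace = ((K * Q)ᴴ * (K * Q)).trace := by
    rw [← t2m, ← hQ2,
      show Kᴴ * (K * (Q * Q)) = (Kᴴ * (K * Q)) * Q from by rw [mul_assoc, mul_assoc],
      trace_mul_comm]
  have hsum : ((R * K)ᴴ * (R * K)).trace + ((K * Q)ᴴ * (K * Q)).trace = 0 := by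
    rw [← t1m, ← t2, ← trace_add, ← mul_add, e1, mul_zero, trace_zero]
  obtain ⟨hz1, -⟩ :=
    (add_eq_zero_iff_of_nonneg (trace_ctm_nonneg _) (trace_ctm_nonneg _)).mp hsum
  have hRK : R * K = 0 := eq_zero_of_trace_ctm hz1
  have hSK : S * K = 0 := by rw [← hR2, mul_assoc, hRK, mul_zero]
  have hSu : IsUnit S.det := by
    have h : IsUnit (S.det * S.det) := by
      rw [← det_mul, hS2]; exact (isUnit_iff_isUnit_det M).mp hMu
    exact isUnit_of_mul_isUnit_left h
  have hK0 : K = 0 := by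
    calc K = S⁻¹ * (S * K) := (nonsing_inv_mul_cancel_left S K hSu).symm
    _ = 0 := by rw [hSK, mul_zero]
  exact sub_eq_zero.mp hK0

end helpers

/-- Final identity in the proof of Proposition 6.2: `φ_{-x}(φ_x(y)) = y`, i.e. with
`z = φ_x(y)` and `I + xᴴ z` invertible,
`y = (I - x xᴴ)^{-1/2} (z + x) (I + xᴴ z)⁻¹ (I - xᴴ x)^{1/2}`. -/
theorem siegel_disk_automorphism_left_inverse {n : ℕ} (hn : 0 < n)
    (x y : Matrix (Fin n) (Fin n) ℂ)
    (hxs : xᵀ = x) (hys : yᵀ = y)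
    (h1 : (1 - x * xᴴ).PosDef) (h2 : (1 - xᴴ * x).PosDef)
    (h4 : IsUnit (1 - xᴴ * y))
    (z : Matrix (Fin n) (Fin n) ℂ)
    (hz : z = (h1.posSemidef.sqrt)⁻¹ * (y - x) * (1 - xᴴ * y)⁻¹ * h2.posSemidef.sqrt)
    (hzu : IsUnit (1 + xᴴ * z)) :
    y = (h1.posSemidef.sqrt)⁻¹ * (z + x) * (1 + xᴴ * z)⁻¹ * h2.posSemidef.sqrt := by
  set A := h1.posSemidef.sqrt with hAdef
  set B := h2.posSemidef.sqrt with hBdef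
  have hAA : A * A = 1 - x * xᴴ := h1.posSemidef.sqrt_mul_self
  have hBB : B * B = 1 - xᴴ * x := h2.posSemidef.sqrt_mul_self
  have hdA : IsUnit A.det := by
    have h : IsUnit (A.det * A.det) := by
      rw [← det_mul, hAA]; exact (isUnit_iff_isUnit_det _).mp h1.isUnit
    exact isUnit_of_mul_isUnit_left h
  have hdB : IsUnit B.det := by
    have h : IsUnit (B.det * B.det) := by
      rw [← det_mul, hBB]; exact (isUnit_iff_isUnit_det _).mp h2.isUnit
    exact isUnit_of_mul_isUnit_left h
  have hdy : IsUnit (1 - xᴴ * y).det := (isUnit_iff_isUnit_det _).mp h4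
  have hAx : A * x = x * B :=
    sqrt_comm h1.posSemidef h2.posSemidef h1.isUnit (by noncomm_ring)
  have hBx : B * xᴴ = xᴴ * A :=
    sqrt_comm h2.posSemidef h1.posSemidef h2.isUnit (by noncomm_ring)
  have h5 : xᴴ * A⁻¹ = B⁻¹ * xᴴ := by
    calc xᴴ * A⁻¹ = B⁻¹ * (B * xᴴ) * A⁻¹ := by
          rw [← mul_assoc, nonsing_inv_mul B hdB, one_mul]
    _ = B⁻¹ * xᴴ * (A * A⁻¹) := by rw [hBx]; simp [mul_assoc]
    _ = B⁻¹ * xᴴ := by rw [mul_nonsing_inv A hdA, mul_one]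
  -- key2 : z + x = A * y * (1 - xᴴ y)⁻¹ * B
  have key2 : z + x = A * y * (1 - xᴴ * y)⁻¹ * B := by
    have hx' : A⁻¹ * (x * (1 - xᴴ * y)) * (1 - xᴴ * y)⁻¹ * B = x := by
      rw [← mul_assoc A⁻¹ x (1 - xᴴ * y), mul_nonsing_inv_cancel_right _ _ hdy,
        mul_assoc, ← hAx, nonsing_inv_mul_cancel_left A x hdA]
    rw [hz]
    calc A⁻¹ * (y - x) * (1 - xᴴ * y)⁻¹ * B + x
        = A⁻¹ * (y - x) * (1 - xᴴ * y)⁻¹ * B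
          + A⁻¹ * (x * (1 - xᴴ * y)) * (1 - xᴴ * y)⁻¹ * B := by rw [hx']
    _ = A⁻¹ * ((y - x) + x * (1 - xᴴ * y)) * (1 - xᴴ * y)⁻¹ * B := by noncomm_ring
    _ = A⁻¹ * ((1 - x * xᴴ) * y) * (1 - xᴴ * y)⁻¹ * B := by
          congr 2
          noncomm_ring
    _ = A * y * (1 - xᴴ * y)⁻¹ * B := by
          rw [← hAA, mul_assoc A A y, nonsing_inv_mul_cancel_left A (A * y) hdA]
  -- key1 : 1 + xᴴ z = B * (1 - xᴴ y)⁻¹ * B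
  have key1 : 1 + xᴴ * z = B * (1 - xᴴ * y)⁻¹ * B := by
    have h1' : (1 : Matrix (Fin n) (Fin n) ℂ)
        = B⁻¹ * (1 - xᴴ * y) * (1 - xᴴ * y)⁻¹ * B := by
      rw [mul_assoc B⁻¹, mul_nonsing_inv _ hdy, mul_one, nonsing_inv_mul B hdB]
    have h2' : xᴴ * z = B⁻¹ * (xᴴ * (y - x)) * (1 - xᴴ * y)⁻¹ * B := by
      rw [hz, ← mul_assoc, ← mul_assoc, ← mul_assoc, mul_assoc xᴴ A⁻¹ (y - x),
        ← mul_assoc xᴴ A⁻¹, h5, mul_assoc B⁻¹ xᴴ (y - x)]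
    calc 1 + xᴴ * z
        = B⁻¹ * (1 - xᴴ * y) * (1 - xᴴ * y)⁻¹ * B
          + B⁻¹ * (xᴴ * (y - x)) * (1 - xᴴ * y)⁻¹ * B := by rw [← h1', ← h2']
    _ = B⁻¹ * ((1 - xᴴ * y) + xᴴ * (y - x)) * (1 - xᴴ * y)⁻¹ * B := by noncomm_ring
    _ = B⁻¹ * (B * B) * (1 - xᴴ * y)⁻¹ * B := by
          rw [hBB]; congr 2; noncomm_ring
    _ = B * (1 - xᴴ * y)⁻¹ * B := by
          rw [nonsing_inv_mul_cancel_left B B hdB]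
  rw [key2, key1, Matrix.mul_inv_rev, Matrix.mul_inv_rev, nonsing_inv_nonsing_inv _ hdy]
  simp only [mul_assoc]
  rw [nonsing_inv_mul B hdB, mul_one, mul_nonsing_inv_cancel_left B _ hdB,
    nonsing_inv_mul _ hdy, mul_one, nonsing_inv_mul_cancel_left A y hdA]
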